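/- There exists a constant C ∈ ℕ (independent of r, P, T, S and the square) such that the following holds: if S is an optimal solution, then for every axis-aligned closed square q of side length r/√2, the number of sensors s ∈ S with s ∈ q and dist(s, P) ≥ r/2 is at most C. -/

import Mathlib

/-- The set of points covered by a finite set `S` of sensors with sensing
radius `r` includes every target: for each `t ∈ T` there is `s ∈ S` with
`dist s t ≤ r`. -/
def Covers (r : ℝ) (T : Set (EuclideanSpace ℝ (Fin 2)))
    (S : Finset (EuclideanSpace ℝ (Fin 2))) : Prop :=
  ∀ t ∈ T, ∃ s ∈ S, dist s t ≤ r

/-- The total moving cost of a sensor set `S`: each sensor moves from its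
nearest station in `P`. -/
noncomputable def cost (P S : Finset (EuclideanSpace ℝ (Fin 2))) : ℝ :=
  ∑ s ∈ S, Metric.infDist s (P : Set (EuclideanSpace ℝ (Fin 2)))

/-- `S` is an optimal solution: it covers `T` and has minimum cost among all
finite sensor sets covering `T`. -/
def Optimal (r : ℝ) (P : Finset (EuclideanSpace ℝ (Fin 2)))
    (T : Set (EuclideanSpace ℝ (Fin 2)))
    (S : Finset (EuclideanSpace ℝ (Fin 2))) : Prop :=
  Covers r T S ∧
    ∀ S' : Finset (EuclideanSpace ℝ (Fin 2)), Covers r T S' → cost P S ≤ cost P S'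

noncomputable def pt (a b : ℝ) : EuclideanSpace ℝ (Fin 2) :=
  (WithLp.equiv 2 (Fin 2 → ℝ)).symm ![a, b]

lemma pt_zero (a b : ℝ) : pt a b 0 = a := rfl
lemma pt_one (a b : ℝ) : pt a b 1 = b := rfl

lemma dist_eq_two (x y : EuclideanSpace ℝ (Fin 2)) :
    dist x y = Real.sqrt ((x 0 - y 0)^2 + (x 1 - y 1)^2) := by
  rw [EuclideanSpace.dist_eq]
  simp [Fin.sum_univ_two, Real.dist_eq, sq_abs]

lemma dist_le_of_coords {x y : EuclideanSpace ℝ (Fin 2)} {a b : ℝ}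
    (h0 : |x 0 - y 0| ≤ a) (h1 : |x 1 - y 1| ≤ b) :
    dist x y ≤ Real.sqrt (a^2 + b^2) := by
  rw [dist_eq_two]
  apply Real.sqrt_le_sqrt
  have h0' : (x 0 - y 0)^2 ≤ a^2 := by
    rw [← sq_abs]; exact pow_le_pow_left₀ (abs_nonneg _) h0 2
  have h1' : (x 1 - y 1)^2 ≤ b^2 := by
    rw [← sq_abs]; exact pow_le_pow_left₀ (abs_nonneg _) h1 2
  linarith

lemma coord_le_dist (x y : EuclideanSpace ℝ (Fin 2)) (i : Fin 2) :
    |x i - y i| ≤ dist x y := by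
  rw [dist_eq_two, ← Real.sqrt_sq_eq_abs]
  apply Real.sqrt_le_sqrt
  fin_cases i <;> simp <;> nlinarith [sq_nonneg (x 1 - y 1), sq_nonneg (x 0 - y 0)]

lemma choose_off {d r : ℝ} (hr : 0 < r) (hd : |d| ≤ 2*r) :
    ∃ k : Fin 3, |d - ((k.val : ℝ) - 1)*(4*r/3)| ≤ 2*r/3 := by
  rw [abs_le] at hd
  rcases le_or_gt d (-(2*r/3)) with h | h
  · exact ⟨0, by rw [abs_le]; norm_num; constructor <;> linarith⟩
  rcases le_or_gt d (2*r/3) with h2 | h2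
  · exact ⟨1, by rw [abs_le]; norm_num; constructor <;> linarith⟩
  · exact ⟨2, by rw [abs_le]; norm_num; constructor <;> linarith⟩

theorem stmt_7 :
    ∃ C : ℕ, ∀ (r : ℝ), 0 < r →
      ∀ (P : Finset (EuclideanSpace ℝ (Fin 2))), P.Nonempty →
      ∀ (T : Set (EuclideanSpace ℝ (Fin 2)))
        (S : Finset (EuclideanSpace ℝ (Fin 2))), Optimal r P T S →
      ∀ x₀ y₀ : ℝ,
        {s : EuclideanSpace ℝ (Fin 2) | s ∈ S ∧
            s 0 ∈ Set.Icc x₀ (x₀ + r / Real.sqrt 2) ∧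
            s 1 ∈ Set.Icc y₀ (y₀ + r / Real.sqrt 2) ∧
            r / 2 ≤ Metric.infDist s (P : Set (EuclideanSpace ℝ (Fin 2)))}.ncard
          ≤ C := by
  classical
  use 45
  intro r hr P hP T S hOpt x₀ y₀
  set Pset := (P : Set (EuclideanSpace ℝ (Fin 2))) with hPset
  set w := r / Real.sqrt 2 with hw
  set Bad : Finset (EuclideanSpace ℝ (Fin 2)) :=
    S.filter (fun s => s 0 ∈ Set.Icc x₀ (x₀ + w) ∧ s 1 ∈ Set.Icc y₀ (y₀ + w) ∧
      r / 2 ≤ Metric.infDist s Pset) with hBad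
  have hset : {s : EuclideanSpace ℝ (Fin 2) | s ∈ S ∧
      s 0 ∈ Set.Icc x₀ (x₀ + w) ∧ s 1 ∈ Set.Icc y₀ (y₀ + w) ∧
      r / 2 ≤ Metric.infDist s Pset} = (Bad : Set (EuclideanSpace ℝ (Fin 2))) := by
    ext s; simp [hBad, Finset.mem_filter, and_assoc]
  rw [hset, Set.ncard_coe_finset]
  by_contra hcontra
  push_neg at hcontra
  have hBadne : Bad.Nonempty := Finset.card_pos.mp (by omega)
  obtain ⟨s₀, hs₀, hmin⟩ := Finset.exists_min_image Bad
    (fun s => Metric.infDist s Pset) hBadne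
  set m := Metric.infDist s₀ Pset with hm_def
  have hs₀' := Finset.mem_filter.mp hs₀
  have hm : r / 2 ≤ m := hs₀'.2.2.2
  have hm0 : 0 < m := lt_of_lt_of_le (by linarith) hm
  -- the 9 replacement sensors
  set N : Finset (EuclideanSpace ℝ (Fin 2)) :=
    Finset.image (fun ij : Fin 3 × Fin 3 =>
      pt (s₀ 0 + ((ij.1.val : ℝ) - 1)*(4*r/3)) (s₀ 1 + ((ij.2.val : ℝ) - 1)*(4*r/3)))
      Finset.univ with hN
  -- any two sensors in the square are within r of each other
  have hsq : ∀ s ∈ Bad, dist s₀ s ≤ r := by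
    intro s hs
    have hs' := Finset.mem_filter.mp hs
    have h0 : |s₀ 0 - s 0| ≤ w := by
      rw [abs_le]
      obtain ⟨⟨a1, a2⟩, _⟩ := hs₀'.2
      obtain ⟨⟨b1, b2⟩, _⟩ := hs'.2
      constructor <;> linarith
    have h1 : |s₀ 1 - s 1| ≤ w := by
      rw [abs_le]
      obtain ⟨_, ⟨a1, a2⟩, _⟩ := hs₀'.2
      obtain ⟨_, ⟨b1, b2⟩, _⟩ := hs'.2
      constructor <;> linarith
    calc dist s₀ s ≤ Real.sqrt (w^2 + w^2) := dist_le_of_coords h0 h1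
      _ = r := by
        rw [hw, div_pow, Real.sq_sqrt (by norm_num : (2:ℝ) ≥ 0)]
        rw [show r^2/2 + r^2/2 = r^2 by ring, Real.sqrt_sq hr.le]
  -- the replacement sensors cover everything within 2r of s₀
  have hcov : ∀ t, dist s₀ t ≤ 2*r → ∃ x ∈ N, dist x t ≤ r := by
    intro t ht
    have hd0 : |t 0 - s₀ 0| ≤ 2*r := by
      have := coord_le_dist t s₀ 0; rw [dist_comm] at ht; linarith
    have hd1 : |t 1 - s₀ 1| ≤ 2*r := by
      have := coord_le_dist t s₀ 1; rw [dist_comm] at ht; linarith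
    obtain ⟨k0, hk0⟩ := choose_off hr hd0
    obtain ⟨k1, hk1⟩ := choose_off hr hd1
    refine ⟨pt (s₀ 0 + ((k0.val : ℝ) - 1)*(4*r/3)) (s₀ 1 + ((k1.val : ℝ) - 1)*(4*r/3)),
      Finset.mem_image.mpr ⟨(k0, k1), Finset.mem_univ _, rfl⟩, ?_⟩
    have e0 : |pt (s₀ 0 + ((k0.val : ℝ) - 1)*(4*r/3)) (s₀ 1 + ((k1.val : ℝ) - 1)*(4*r/3)) 0
        - t 0| ≤ 2*r/3 := by
      rw [pt_zero, show s₀ 0 + ((k0.val : ℝ) - 1)*(4*r/3) - t 0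
        = -((t 0 - s₀ 0) - ((k0.val : ℝ) - 1)*(4*r/3)) by ring, abs_neg]
      exact hk0
    have e1 : |pt (s₀ 0 + ((k0.val : ℝ) - 1)*(4*r/3)) (s₀ 1 + ((k1.val : ℝ) - 1)*(4*r/3)) 1
        - t 1| ≤ 2*r/3 := by
      rw [pt_one, show s₀ 1 + ((k1.val : ℝ) - 1)*(4*r/3) - t 1
        = -((t 1 - s₀ 1) - ((k1.val : ℝ) - 1)*(4*r/3)) by ring, abs_neg]
      exact hk1
    calc dist _ t ≤ Real.sqrt ((2*r/3)^2 + (2*r/3)^2) := dist_le_of_coords e0 e1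
      _ ≤ Real.sqrt (r^2) := Real.sqrt_le_sqrt (by nlinarith)
      _ = r := Real.sqrt_sq hr.le
  -- each replacement sensor has moving cost at most 5m
  have hNbound : ∀ x ∈ N, Metric.infDist x Pset ≤ 5*m := by
    intro x hx
    obtain ⟨⟨k0, k1⟩, _, rfl⟩ := Finset.mem_image.mp hx
    have hk : ∀ k : Fin 3, |((k.val : ℝ) - 1)| ≤ 1 := by
      intro k
      have : (k.val : ℝ) ≤ 2 := by exact_mod_cast Nat.le_of_lt_succ k.isLt
      have : (0:ℝ) ≤ (k.val : ℝ) := Nat.cast_nonneg _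
      rw [abs_le]; constructor <;> linarith
    have e0 : |pt (s₀ 0 + ((k0.val : ℝ) - 1)*(4*r/3)) (s₀ 1 + ((k1.val : ℝ) - 1)*(4*r/3)) 0
        - s₀ 0| ≤ 4*r/3 := by
      rw [pt_zero, show s₀ 0 + ((k0.val : ℝ) - 1)*(4*r/3) - s₀ 0
        = ((k0.val : ℝ) - 1)*(4*r/3) by ring, abs_mul]
      calc |((k0.val : ℝ) - 1)| * |4*r/3| ≤ 1 * (4*r/3) := by
            apply mul_le_mul (hk k0) (le_of_eq (abs_of_nonneg (by linarith)))
              (abs_nonneg _) zero_le_one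
        _ = 4*r/3 := one_mul _
    have e1 : |pt (s₀ 0 + ((k0.val : ℝ) - 1)*(4*r/3)) (s₀ 1 + ((k1.val : ℝ) - 1)*(4*r/3)) 1
        - s₀ 1| ≤ 4*r/3 := by
      rw [pt_one, show s₀ 1 + ((k1.val : ℝ) - 1)*(4*r/3) - s₀ 1
        = ((k1.val : ℝ) - 1)*(4*r/3) by ring, abs_mul]
      calc |((k1.val : ℝ) - 1)| * |4*r/3| ≤ 1 * (4*r/3) := by
            apply mul_le_mul (hk k1) (le_of_eq (abs_of_nonneg (by linarith)))
              (abs_nonneg _) zero_le_one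
        _ = 4*r/3 := one_mul _
    have hdx : dist _ s₀ ≤ 2*r :=
      calc dist _ s₀ ≤ Real.sqrt ((4*r/3)^2 + (4*r/3)^2) := dist_le_of_coords e0 e1
        _ ≤ Real.sqrt ((2*r)^2) := Real.sqrt_le_sqrt (by nlinarith)
        _ = 2*r := Real.sqrt_sq (by linarith)
    calc Metric.infDist _ Pset ≤ Metric.infDist s₀ Pset + dist _ s₀ :=
          Metric.infDist_le_infDist_add_dist
      _ ≤ m + 2*r := by rw [← hm_def]; linarith
      _ ≤ 5*m := by linarith
  -- the replacement solution
  set S' := (S \ Bad) ∪ N with hS'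
  have hcovers : Covers r T S' := by
    intro t ht
    obtain ⟨s, hsS, hst⟩ := hOpt.1 t ht
    by_cases hb : s ∈ Bad
    · have h2r : dist s₀ t ≤ 2*r :=
        calc dist s₀ t ≤ dist s₀ s + dist s t := dist_triangle _ _ _
          _ ≤ r + r := add_le_add (hsq s hb) hst
          _ = 2*r := by ring
      obtain ⟨x, hxN, hxt⟩ := hcov t h2r
      exact ⟨x, Finset.mem_union_right _ hxN, hxt⟩
    · exact ⟨s, Finset.mem_union_left _ (Finset.mem_sdiff.mpr ⟨hsS, hb⟩), hst⟩
  have hopt := hOpt.2 S' hcovers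
  -- cost bounds
  have hBsub : Bad ⊆ S := Finset.filter_subset _ _
  have hsplit : cost P (S \ Bad) + cost P Bad = cost P S := Finset.sum_sdiff hBsub
  have hcostS' : cost P S' ≤ cost P (S \ Bad) + cost P N := by
    rw [hS', cost, ← Finset.union_sdiff_self_eq_union,
      Finset.sum_union Finset.sdiff_disjoint.symm]
    apply add_le_add_right
    apply Finset.sum_le_sum_of_subset_of_nonneg (Finset.sdiff_subset)
    intro i _ _
    exact Metric.infDist_nonneg
  have hcostN : cost P N ≤ 45 * m := by
    calc cost P N ≤ ∑ _x ∈ N, 5*m := Finset.sum_le_sum (fun x hx => hNbound x hx)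
      _ = N.card * (5*m) := by rw [Finset.sum_const, nsmul_eq_mul]
      _ ≤ 9 * (5*m) := by
        apply mul_le_mul_of_nonneg_right _ (by linarith)
        have : N.card ≤ (Finset.univ : Finset (Fin 3 × Fin 3)).card :=
          Finset.card_image_le
        simp at this
        exact_mod_cast by omega
      _ = 45 * m := by ring
  have hcostBad : (Bad.card : ℝ) * m ≤ cost P Bad := by
    calc (Bad.card : ℝ) * m = ∑ _s ∈ Bad, m := by rw [Finset.sum_const, nsmul_eq_mul]
      _ ≤ cost P Bad := Finset.sum_le_sum (fun s hs => hmin s hs)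
  have : (Bad.card : ℝ) * m ≤ 45 * m := by
    have h1 : cost P (S \ Bad) + (Bad.card : ℝ) * m ≤ cost P S := by
      rw [← hsplit]; linarith
    have h2 : cost P S' ≤ cost P (S \ Bad) + 45 * m := by linarith
    linarith
  have : (Bad.card : ℝ) ≤ 45 := le_of_mul_le_mul_right this hm0
  have : Bad.card ≤ 45 := by exact_mod_cast this
  omega
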